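/- Let A be a ternary Jordan algebra over a field F with char F ≠ 2, 3 that decomposes as A = B ⊕ C, where B and C are ideals of A with B ∩ C = {0} and B + C = A, and suppose Z(A) = {0}. Then every derivation D of A satisfies D(B) ⊆ B and D(C) ⊆ C, and Der(A) = Der(B) ⊕ Der(C): identifying a derivation of B (resp. of C) with its extension to A by zero on C (resp. on B), every derivation of A is uniquely the sum of a derivation of B and a derivation of C, and both summands are ideals of the Lie algebra Der(A). -/

import Mathlib

/-- A ternary Jordan algebra structure: a totally symmetric trilinear multiplication
`t` on a vector space such that every commutator of right multiplication operators
is a derivation. -/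
structure IsTernaryJordan (F : Type*) [Field F] {A : Type*} [AddCommGroup A]
    [Module F A] (t : A → A → A → A) : Prop where
  add_left : ∀ x y z w : A, t (x + y) z w = t x z w + t y z w
  smul_left : ∀ (c : F) (x y z : A), t (c • x) y z = c • t x y z
  symm12 : ∀ x y z : A, t x y z = t y x z
  symm23 : ∀ x y z : A, t x y z = t x z y
  comm_der : ∀ x₂ x₃ y₂ y₃ a b c : A,
    t (t (t a b c) x₂ x₃) y₂ y₃ - t (t (t a b c) y₂ y₃) x₂ x₃ =
      t (t (t a x₂ x₃) y₂ y₃ - t (t a y₂ y₃) x₂ x₃) b c +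
        t a (t (t b x₂ x₃) y₂ y₃ - t (t b y₂ y₃) x₂ x₃) c +
          t a b (t (t c x₂ x₃) y₂ y₃ - t (t c y₂ y₃) x₂ x₃)
/-- A derivation of the ternary algebra `(A, t)`. -/
def IsTDer (F : Type*) [Field F] {A : Type*} [AddCommGroup A] [Module F A]
    (t : A → A → A → A) (D : A →ₗ[F] A) : Prop :=
  ∀ x y z : A, D (t x y z) = t (D x) y z + t x (D y) z + t x y (D z)

/-- The extension-by-zero picture: `D` is (the extension to `A` of) a derivation of
the ideal `B`, vanishing on the complementary ideal `C`. -/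
def DerOn (F : Type*) [Field F] {A : Type*} [AddCommGroup A] [Module F A]
    (t : A → A → A → A) (B C : Submodule F A) (D : A →ₗ[F] A) : Prop :=
  (∀ x ∈ B, D x ∈ B) ∧ (∀ x ∈ C, D x = 0) ∧
    ∀ x ∈ B, ∀ y ∈ B, ∀ z ∈ B,
      D (t x y z) = t (D x) y z + t x (D y) z + t x y (D z)

section Aux

variable {F : Type*} [Field F] {A : Type*} [AddCommGroup A] [Module F A]
  {t : A → A → A → A}

lemma tj_zero1 (ht : IsTernaryJordan F t) (y z : A) : t 0 y z = 0 := by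
  have h := ht.smul_left 0 0 y z
  simpa using h

lemma tj_add1 (ht : IsTernaryJordan F t) (a b y z : A) :
    t (a + b) y z = t a y z + t b y z := ht.add_left a b y z

lemma tj_add2 (ht : IsTernaryJordan F t) (x a b z : A) :
    t x (a + b) z = t x a z + t x b z := by
  rw [ht.symm12, tj_add1 ht, ht.symm12 a, ht.symm12 b]

lemma tj_add3 (ht : IsTernaryJordan F t) (x y a b : A) :
    t x y (a + b) = t x y a + t x y b := by
  rw [ht.symm23, tj_add2 ht, ht.symm23 x a, ht.symm23 x b]

lemma tj_neg1 (ht : IsTernaryJordan F t) (a y z : A) : t (-a) y z = -t a y z := by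
  have h := tj_add1 ht a (-a) y z
  rw [add_neg_cancel, tj_zero1 ht] at h
  exact (eq_neg_of_add_eq_zero_right h.symm)

lemma tj_sub1 (ht : IsTernaryJordan F t) (a b y z : A) :
    t (a - b) y z = t a y z - t b y z := by
  rw [sub_eq_add_neg, tj_add1 ht, tj_neg1 ht, sub_eq_add_neg]

lemma tj_sub2 (ht : IsTernaryJordan F t) (x a b z : A) :
    t x (a - b) z = t x a z - t x b z := by
  rw [ht.symm12, tj_sub1 ht, ht.symm12 a, ht.symm12 b]

lemma tj_sub3 (ht : IsTernaryJordan F t) (x y a b : A) :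
    t x y (a - b) = t x y a - t x y b := by
  rw [ht.symm23, tj_sub2 ht, ht.symm23 x a, ht.symm23 x b]

/-- Mixed products of the two ideals vanish (slots 1 and 2). -/
lemma tj_mix12 (ht : IsTernaryJordan F t) {B C : Submodule F A}
    (hB : ∀ b ∈ B, ∀ x y : A, t b x y ∈ B)
    (hC : ∀ c ∈ C, ∀ x y : A, t c x y ∈ C)
    (hdisj : B ⊓ C = ⊥) {b c : A} (hb : b ∈ B) (hc : c ∈ C) (x : A) :
    t b c x = 0 := by
  have h1 : t b c x ∈ B := hB b hb c x
  have h2 : t b c x ∈ C := by rw [ht.symm12]; exact hC c hc b x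
  have h3 : t b c x ∈ B ⊓ C := ⟨h1, h2⟩
  rw [hdisj] at h3
  exact h3

lemma tj_mix13 (ht : IsTernaryJordan F t) {B C : Submodule F A}
    (hB : ∀ b ∈ B, ∀ x y : A, t b x y ∈ B)
    (hC : ∀ c ∈ C, ∀ x y : A, t c x y ∈ C)
    (hdisj : B ⊓ C = ⊥) {b c : A} (hb : b ∈ B) (hc : c ∈ C) (x : A) :
    t b x c = 0 := by
  rw [ht.symm23]; exact tj_mix12 ht hB hC hdisj hb hc x

lemma tj_mix23 (ht : IsTernaryJordan F t) {B C : Submodule F A}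
    (hB : ∀ b ∈ B, ∀ x y : A, t b x y ∈ B)
    (hC : ∀ c ∈ C, ∀ x y : A, t c x y ∈ C)
    (hdisj : B ⊓ C = ⊥) {b c : A} (hb : b ∈ B) (hc : c ∈ C) (x : A) :
    t x b c = 0 := by
  rw [ht.symm12]; exact tj_mix13 ht hB hC hdisj hb hc x

/-- If `c' ∈ C` is annihilated by `C × C`, it lies in the annihilator, hence is zero. -/
lemma tj_key (ht : IsTernaryJordan F t) {B C : Submodule F A}
    (hB : ∀ b ∈ B, ∀ x y : A, t b x y ∈ B)
    (hC : ∀ c ∈ C, ∀ x y : A, t c x y ∈ C)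
    (hdisj : B ⊓ C = ⊥) (hsum : B ⊔ C = ⊤)
    (hZ : ∀ z : A, (∀ x y : A, t x y z = 0) → z = 0)
    {c' : A} (hc' : c' ∈ C)
    (h : ∀ c1 ∈ C, ∀ c2 ∈ C, t c1 c2 c' = 0) : c' = 0 := by
  apply hZ
  intro x y
  obtain ⟨bx, hbx, cx, hcx, rfl⟩ :=
    Submodule.mem_sup.mp (show x ∈ B ⊔ C by rw [hsum]; trivial)
  obtain ⟨by', hby, cy, hcy, rfl⟩ :=
    Submodule.mem_sup.mp (show y ∈ B ⊔ C by rw [hsum]; trivial)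
  rw [tj_add1 ht, tj_add2 ht, tj_add2 ht,
    tj_mix13 ht hB hC hdisj hbx hc' by',
    tj_mix12 ht hB hC hdisj hbx hcy c',
    show t cx by' c' = 0 by rw [ht.symm12]; exact tj_mix13 ht hB hC hdisj hby hc' cx,
    h cx hcx cy hcy]
  simp

/-- A derivation preserves the ideal `B`. -/
lemma tj_preserve (ht : IsTernaryJordan F t) {B C : Submodule F A}
    (hB : ∀ b ∈ B, ∀ x y : A, t b x y ∈ B)
    (hC : ∀ c ∈ C, ∀ x y : A, t c x y ∈ C)
    (hdisj : B ⊓ C = ⊥) (hsum : B ⊔ C = ⊤)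
    (hZ : ∀ z : A, (∀ x y : A, t x y z = 0) → z = 0)
    (D : A →ₗ[F] A) (hD : IsTDer F t D) :
    ∀ b ∈ B, D b ∈ B := by
  have hdisj' : C ⊓ B = ⊥ := by rw [inf_comm]; exact hdisj
  intro b hb
  obtain ⟨b', hb', c', hc', hbc⟩ :=
    Submodule.mem_sup.mp (show D b ∈ B ⊔ C by rw [hsum]; trivial)
  have hclaim : ∀ c1 ∈ C, ∀ c2 ∈ C, t c1 c2 (D b) = 0 := by
    intro c1 hc1 c2 hc2
    have h0 : t c1 c2 b = 0 := tj_mix13 ht hC hB hdisj' hc1 hb c2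
    have hder := hD c1 c2 b
    rw [h0, map_zero] at hder
    have h1 : t (D c1) c2 b = 0 := by
      obtain ⟨u, hu, v, hv, huv⟩ :=
        Submodule.mem_sup.mp (show D c1 ∈ B ⊔ C by rw [hsum]; trivial)
      rw [← huv, tj_add1 ht, tj_mix12 ht hB hC hdisj hu hc2 b,
        tj_mix13 ht hC hB hdisj' hv hb c2]
      simp
    have h2 : t c1 (D c2) b = 0 := by
      rw [ht.symm12]
      obtain ⟨u, hu, v, hv, huv⟩ :=
        Submodule.mem_sup.mp (show D c2 ∈ B ⊔ C by rw [hsum]; trivial)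
      rw [← huv, tj_add1 ht, tj_mix12 ht hB hC hdisj hu hc1 b,
        tj_mix13 ht hC hB hdisj' hv hb c1]
      simp
    rw [h1, h2] at hder
    simpa using hder.symm
  have hcc : ∀ c1 ∈ C, ∀ c2 ∈ C, t c1 c2 c' = 0 := by
    intro c1 hc1 c2 hc2
    have h4 : t c1 c2 (b' + c') = 0 := by rw [hbc]; exact hclaim c1 hc1 c2 hc2
    rw [tj_add3 ht, tj_mix13 ht hC hB hdisj' hc1 hb' c2] at h4
    simpa using h4
  have hc0 : c' = 0 := tj_key ht hB hC hdisj hsum hZ hc' hcc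
  rw [← hbc, hc0, add_zero]
  exact hb'

lemma tj_cycle (ht : IsTernaryJordan F t) (x y w : A) : t x y w = t w y x := by
  rw [ht.symm12, ht.symm23, ht.symm12]

/-- Product of fully decomposed elements. -/
lemma tj_prod (ht : IsTernaryJordan F t) {B C : Submodule F A}
    (hB : ∀ b ∈ B, ∀ x y : A, t b x y ∈ B)
    (hC : ∀ c ∈ C, ∀ x y : A, t c x y ∈ C)
    (hdisj : B ⊓ C = ⊥)
    {bx cx by' cy bz cz : A} (hbx : bx ∈ B) (hcx : cx ∈ C)
    (hby : by' ∈ B) (hcy : cy ∈ C) (hbz : bz ∈ B) (hcz : cz ∈ C) :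
    t (bx + cx) (by' + cy) (bz + cz) = t bx by' bz + t cx cy cz := by
  have hdisj' : C ⊓ B = ⊥ := by rw [inf_comm]; exact hdisj
  rw [tj_add1 ht, tj_add2 ht, tj_add2 ht, tj_add3 ht, tj_add3 ht, tj_add3 ht,
    tj_add3 ht,
    tj_mix13 ht hB hC hdisj hbx hcz by',
    tj_mix12 ht hB hC hdisj hbx hcy bz,
    tj_mix12 ht hB hC hdisj hbx hcy cz,
    tj_mix12 ht hC hB hdisj' hcx hby bz,
    tj_mix12 ht hC hB hdisj' hcx hby cz,
    tj_mix13 ht hC hB hdisj' hcx hbz cy]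
  abel

/-- Absorption: an element of `B` multiplied with decomposed elements only sees
the `B`-components. -/
lemma tj_absorb (ht : IsTernaryJordan F t) {B C : Submodule F A}
    (hB : ∀ b ∈ B, ∀ x y : A, t b x y ∈ B)
    (hC : ∀ c ∈ C, ∀ x y : A, t c x y ∈ C)
    (hdisj : B ⊓ C = ⊥)
    {u by' cy bz cz : A} (hu : u ∈ B)
    (hby : by' ∈ B) (hcy : cy ∈ C) (hbz : bz ∈ B) (hcz : cz ∈ C) :
    t u (by' + cy) (bz + cz) = t u by' bz := by
  have h := tj_prod ht hB hC hdisj hu C.zero_mem hby hcy hbz hcz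
  simpa [tj_zero1 ht] using h

/-- Extension by zero of a derivation of `B` is a derivation of `A`. -/
lemma tj_ext (ht : IsTernaryJordan F t) {B C : Submodule F A}
    (hB : ∀ b ∈ B, ∀ x y : A, t b x y ∈ B)
    (hC : ∀ c ∈ C, ∀ x y : A, t c x y ∈ C)
    (hdisj : B ⊓ C = ⊥) (hsum : B ⊔ C = ⊤)
    (D : A →ₗ[F] A) (hD : DerOn F t B C D) : IsTDer F t D := by
  obtain ⟨hBB, hC0, hder⟩ := hD
  intro x y z
  obtain ⟨bx, hbx, cx, hcx, rfl⟩ :=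
    Submodule.mem_sup.mp (show x ∈ B ⊔ C by rw [hsum]; trivial)
  obtain ⟨by', hby, cy, hcy, rfl⟩ :=
    Submodule.mem_sup.mp (show y ∈ B ⊔ C by rw [hsum]; trivial)
  obtain ⟨bz, hbz, cz, hcz, rfl⟩ :=
    Submodule.mem_sup.mp (show z ∈ B ⊔ C by rw [hsum]; trivial)
  have hDx : D (bx + cx) = D bx := by rw [map_add, hC0 cx hcx, add_zero]
  have hDy : D (by' + cy) = D by' := by rw [map_add, hC0 cy hcy, add_zero]
  have hDz : D (bz + cz) = D bz := by rw [map_add, hC0 cz hcz, add_zero]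
  have e1 : t (D bx) (by' + cy) (bz + cz) = t (D bx) by' bz :=
    tj_absorb ht hB hC hdisj (hBB bx hbx) hby hcy hbz hcz
  have e2 : t (bx + cx) (D by') (bz + cz) = t bx (D by') bz := by
    rw [ht.symm12, tj_absorb ht hB hC hdisj (hBB by' hby) hbx hcx hbz hcz,
      ht.symm12]
  have e3 : t (bx + cx) (by' + cy) (D bz) = t bx by' (D bz) := by
    rw [tj_cycle ht, tj_absorb ht hB hC hdisj (hBB bz hbz) hby hcy hbx hcx,
      tj_cycle ht]
  rw [tj_prod ht hB hC hdisj hbx hcx hby hcy hbz hcz, map_add,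
    hC0 _ (hC cx hcx cy cz), add_zero, hder bx hbx by' hby bz hbz,
    hDx, hDy, hDz, e1, e2, e3]

/-- The bracket of two derivations is a derivation. -/
lemma tj_bracket (ht : IsTernaryJordan F t) (D1 D2 : A →ₗ[F] A)
    (h1 : IsTDer F t D1) (h2 : IsTDer F t D2) :
    IsTDer F t (D1 ∘ₗ D2 - D2 ∘ₗ D1) := by
  intro x y z
  simp only [LinearMap.sub_apply, LinearMap.comp_apply]
  rw [h2 x y z, h1 x y z, map_add, map_add, map_add, map_add,
    h1 (D2 x) y z, h1 x (D2 y) z, h1 x y (D2 z),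
    h2 (D1 x) y z, h2 x (D1 y) z, h2 x y (D1 z),
    tj_sub1 ht, tj_sub2 ht, tj_sub3 ht]
  abel

end Aux

/-- if `A = B ⊕ C` with `B, C` ideals and `Z(A) = 0`, then every
derivation preserves `B` and `C`, extensions by zero of derivations of `B` (resp.
`C`) are derivations of `A`, `Der(A) = Der(B) ⊕ Der(C)` (unique decomposition), and
both summands are Lie ideals of `Der(A)`. -/
theorem stmt11 {F : Type*} [Field F] {A : Type*} [AddCommGroup A] [Module F A]
    (h2 : (2 : F) ≠ 0) (h3 : (3 : F) ≠ 0)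
    (t : A → A → A → A) (ht : IsTernaryJordan F t)
    (B C : Submodule F A)
    (hB : ∀ b ∈ B, ∀ x y : A, t b x y ∈ B)
    (hC : ∀ c ∈ C, ∀ x y : A, t c x y ∈ C)
    (hdisj : B ⊓ C = ⊥) (hsum : B ⊔ C = ⊤)
    (hZ : ∀ z : A, (∀ x y : A, t x y z = 0) → z = 0) :
    (∀ D : A →ₗ[F] A, IsTDer F t D → (∀ b ∈ B, D b ∈ B) ∧ ∀ c ∈ C, D c ∈ C) ∧
    (∀ D : A →ₗ[F] A, DerOn F t B C D → IsTDer F t D) ∧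
    (∀ D : A →ₗ[F] A, DerOn F t C B D → IsTDer F t D) ∧
    (∀ D : A →ₗ[F] A, IsTDer F t D →
      ∃! p : (A →ₗ[F] A) × (A →ₗ[F] A),
        DerOn F t B C p.1 ∧ DerOn F t C B p.2 ∧ D = p.1 + p.2) ∧
    (∀ D₁ D : A →ₗ[F] A, DerOn F t B C D₁ → IsTDer F t D →
      DerOn F t B C (D₁ ∘ₗ D - D ∘ₗ D₁)) ∧
    (∀ D₂ D : A →ₗ[F] A, DerOn F t C B D₂ → IsTDer F t D →
      DerOn F t C B (D₂ ∘ₗ D - D ∘ₗ D₂)) := by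
  have hdisj' : C ⊓ B = ⊥ := by rw [inf_comm]; exact hdisj
  have hsum' : C ⊔ B = ⊤ := by rw [sup_comm]; exact hsum
  have preserveB : ∀ D : A →ₗ[F] A, IsTDer F t D → ∀ b ∈ B, D b ∈ B :=
    fun D hD => tj_preserve ht hB hC hdisj hsum hZ D hD
  have preserveC : ∀ D : A →ₗ[F] A, IsTDer F t D → ∀ c ∈ C, D c ∈ C :=
    fun D hD => tj_preserve ht hC hB hdisj' hsum' hZ D hD
  have hcompl : IsCompl B C := ⟨disjoint_iff.mpr hdisj, codisjoint_iff.mpr hsum⟩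
  set πB : A →ₗ[F] A := B.subtype ∘ₗ Submodule.projectionOnto B C hcompl
    with hπBdef
  set πC : A →ₗ[F] A := C.subtype ∘ₗ Submodule.projectionOnto C B hcompl.symm
    with hπCdef
  have hπBb : ∀ b ∈ B, πB b = b := by
    intro b hb
    have := Submodule.projectionOnto_apply_left hcompl ⟨b, hb⟩
    simpa [hπBdef] using congrArg Subtype.val this
  have hπBc : ∀ c ∈ C, πB c = 0 := by
    intro c hc
    have := Submodule.projectionOnto_apply_of_mem_right hcompl hc
    simpa [hπBdef] using congrArg Subtype.val this
  have hπCc : ∀ c ∈ C, πC c = c := by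
    intro c hc
    have := Submodule.projectionOnto_apply_left hcompl.symm ⟨c, hc⟩
    simpa [hπCdef] using congrArg Subtype.val this
  have hπCb : ∀ b ∈ B, πC b = 0 := by
    intro b hb
    have := Submodule.projectionOnto_apply_of_mem_right hcompl.symm hb
    simpa [hπCdef] using congrArg Subtype.val this
  have hπadd : ∀ x : A, πB x + πC x = x := by
    intro x
    simpa [hπBdef, hπCdef] using
      Submodule.projection_add_projection_eq_self hcompl x
  have hπBmem : ∀ x : A, πB x ∈ B := fun x => by
    simp only [hπBdef, LinearMap.comp_apply]; exact Submodule.coe_mem _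
  have hπCmem : ∀ x : A, πC x ∈ C := fun x => by
    simp only [hπCdef, LinearMap.comp_apply]; exact Submodule.coe_mem _
  refine ⟨fun D hD => ⟨preserveB D hD, preserveC D hD⟩,
    fun D hD => tj_ext ht hB hC hdisj hsum D hD,
    fun D hD => tj_ext ht hC hB hdisj' hsum' D hD, ?_, ?_, ?_⟩
  · -- unique decomposition
    intro D hD
    have hDB := preserveB D hD
    have hDC := preserveC D hD
    refine ⟨(D ∘ₗ πB, D ∘ₗ πC), ⟨⟨?_, ?_, ?_⟩, ⟨?_, ?_, ?_⟩, ?_⟩, ?_⟩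
    · intro b hb
      simp only [LinearMap.comp_apply]
      rw [hπBb b hb]; exact hDB b hb
    · intro c hc
      simp only [LinearMap.comp_apply]
      rw [hπBc c hc, map_zero]
    · intro x hx y hy z hz
      simp only [LinearMap.comp_apply]
      rw [hπBb _ (hB x hx y z), hπBb x hx, hπBb y hy, hπBb z hz]
      exact hD x y z
    · intro c hc
      simp only [LinearMap.comp_apply]
      rw [hπCc c hc]; exact hDC c hc
    · intro b hb
      simp only [LinearMap.comp_apply]
      rw [hπCb b hb, map_zero]
    · intro x hx y hy z hz
      simp only [LinearMap.comp_apply]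
      rw [hπCc _ (hC x hx y z), hπCc x hx, hπCc y hy, hπCc z hz]
      exact hD x y z
    · ext x
      simp only [LinearMap.add_apply, LinearMap.comp_apply]
      rw [← map_add, hπadd x]
    · rintro ⟨q1, q2⟩ ⟨hq1, hq2, hq3⟩
      have hq1B : ∀ b ∈ B, q1 b = D b := by
        intro b hb
        have : D b = q1 b + q2 b := by rw [hq3]; rfl
        rw [this, hq2.2.1 b hb, add_zero]
      have hq2C : ∀ c ∈ C, q2 c = D c := by
        intro c hc
        have : D c = q1 c + q2 c := by rw [hq3]; rfl
        rw [this, hq1.2.1 c hc, zero_add]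
      have e1 : q1 = D ∘ₗ πB := by
        ext x
        conv_lhs => rw [← hπadd x]
        rw [map_add, hq1.2.1 _ (hπCmem x), add_zero, hq1B _ (hπBmem x)]
        rfl
      have e2 : q2 = D ∘ₗ πC := by
        ext x
        conv_lhs => rw [← hπadd x]
        rw [map_add, hq2.2.1 _ (hπBmem x), zero_add, hq2C _ (hπCmem x)]
        rfl
      exact Prod.ext e1 e2
  · -- Lie ideal B side
    intro D₁ D hD₁ hD
    have hT1 : IsTDer F t D₁ := tj_ext ht hB hC hdisj hsum D₁ hD₁
    have hbr := tj_bracket ht D₁ D hT1 hD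
    obtain ⟨h11, h12, -⟩ := hD₁
    refine ⟨?_, ?_, fun x hx y hy z hz => hbr x y z⟩
    · intro b hb
      simp only [LinearMap.sub_apply, LinearMap.comp_apply]
      exact Submodule.sub_mem B (h11 _ (preserveB D hD b hb))
        (preserveB D hD _ (h11 b hb))
    · intro c hc
      simp only [LinearMap.sub_apply, LinearMap.comp_apply]
      rw [h12 _ (preserveC D hD c hc), h12 c hc, map_zero, sub_zero]
  · -- Lie ideal C side
    intro D₂ D hD₂ hD
    have hT2 : IsTDer F t D₂ := tj_ext ht hC hB hdisj' hsum' D₂ hD₂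
    have hbr := tj_bracket ht D₂ D hT2 hD
    obtain ⟨h21, h22, -⟩ := hD₂
    refine ⟨?_, ?_, fun x hx y hy z hz => hbr x y z⟩
    · intro c hc
      simp only [LinearMap.sub_apply, LinearMap.comp_apply]
      exact Submodule.sub_mem C (h21 _ (preserveC D hD c hc))
        (preserveC D hD _ (h21 c hc))
    · intro b hb
      simp only [LinearMap.sub_apply, LinearMap.comp_apply]
      rw [h22 _ (preserveB D hD b hb), h22 b hb, map_zero, sub_zero]
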